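/- Let $\mu$ be a $\sigma$-finite, ergodic, $T$-invariant Borel measure, and suppose there exists $Y$ with $0<\mu(Y)<\infty$ such that $\sum_{n\ge0}P^n1_Y=\infty$ $\mu$-a.e. on $Y$, where $P$ is the Perron–Frobenius operator. Then $\mu$ is conservative. -/

import Mathlib

open MeasureTheory Filter ENNReal

lemma stepA {X : Type*} [MeasurableSpace X] (T : X → X) (hT : Measurable T)
    (mu : Measure X)
    (P : (X → ℝ) → (X → ℝ))
    (hP : ∀ f : X → ℝ, Integrable f mu → ∀ A : Set X, MeasurableSet A →
      ∫ x in A, P f x ∂mu = ∫ x in T ⁻¹' A, f x ∂mu)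
    (Y : Set X) (hYm : MeasurableSet Y) (hY0 : 0 < mu Y) (hYfin : mu Y < ∞) :
    ∀ n, Integrable (P^[n] (Y.indicator 1)) mu ∧
      ∀ A : Set X, MeasurableSet A →
        ∫ x in A, P^[n] (Y.indicator 1) x ∂mu = (mu (Y ∩ T^[n] ⁻¹' A)).toReal := by
  intro n
  induction n with
  | zero =>
    constructor
    · exact (integrable_indicator_iff hYm).2 (integrableOn_const hYfin.ne)
    · intro A hA
      simp only [Function.iterate_zero, id_eq, Set.preimage_id]
      rw [integral_indicator hYm]
      simp [Measure.restrict_restrict hYm, Set.inter_comm]; rfl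
  | succ n ih =>
    have key : ∀ A : Set X, MeasurableSet A →
        ∫ x in A, P^[n+1] (Y.indicator 1) x ∂mu = (mu (Y ∩ T^[n+1] ⁻¹' A)).toReal := by
      intro A hA
      have h1 : P^[n+1] (Y.indicator 1) = P (P^[n] (Y.indicator 1)) :=
        Function.iterate_succ_apply' P n _
      rw [h1, hP _ ih.1 A hA, ih.2 (T ⁻¹' A) (hT hA)]
      congr 2
      rw [← Set.preimage_comp, ← Function.iterate_succ']
    constructor
    · by_contra hni
      have h0 : ∫ x in Set.univ, P^[n+1] (Y.indicator 1) x ∂mu = 0 := by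
        rw [Measure.restrict_univ]; exact integral_undef hni
      have h1 := key Set.univ MeasurableSet.univ
      rw [h0] at h1
      simp only [Set.preimage_univ, Set.inter_univ] at h1
      exact absurd h1.symm (ne_of_gt (ENNReal.toReal_pos hY0.ne' hYfin.ne))
    · exact key

lemma stepB {X : Type*} [MeasurableSpace X] (T : X → X) (hT : Measurable T)
    (mu : Measure X)
    (P : (X → ℝ) → (X → ℝ))
    (Y : Set X) (hYm : MeasurableSet Y) (hY0 : 0 < mu Y) (hYfin : mu Y < ∞)
    (hdiv : ∀ᵐ x ∂(mu.restrict Y),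
      Tendsto (fun N => ∑ n ∈ Finset.range N, P^[n] (Y.indicator 1) x)
        atTop atTop)
    (hInt : ∀ n, Integrable (P^[n] (Y.indicator 1)) mu)
    (hSet : ∀ n, ∀ A : Set X, MeasurableSet A →
        ∫ x in A, P^[n] (Y.indicator 1) x ∂mu = (mu (Y ∩ T^[n] ⁻¹' A)).toReal)
    (N : ℕ) (hN : 1 ≤ N) :
    mu (Y \ ⋃ n, ⋃ (_ : N ≤ n), T^[n] ⁻¹' Y) = 0 := by
  classical
  set f : ℕ → X → ℝ := fun n => P^[n] (Y.indicator 1) with hf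
  -- nonnegativity
  have hnn : ∀ n, 0 ≤ᵐ[mu] f n := by
    intro n
    refine ae_nonneg_of_forall_setIntegral_nonneg (hInt n) (fun s hs _ => ?_)
    rw [hSet n s hs]; exact ENNReal.toReal_nonneg
  set B : Set X := Y \ ⋃ n, ⋃ (_ : N ≤ n), T^[n] ⁻¹' Y with hB
  have hBm : MeasurableSet B :=
    hYm.diff (MeasurableSet.iUnion fun n => MeasurableSet.iUnion fun _ => (hT.iterate n) hYm)
  have hBY : B ⊆ Y := Set.diff_subset
  by_contra hB0
  -- the sets E n
  set E : ℕ → Set X := fun n => Y ∩ T^[n] ⁻¹' B with hE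
  have hEm : ∀ n, MeasurableSet (E n) := fun n => hYm.inter ((hT.iterate n) hBm)
  have hEY : ∀ n, E n ⊆ Y := fun n => Set.inter_subset_left
  -- pointwise multiplicity bound
  have claim1 : ∀ (x : X) (M : ℕ),
      (∑ n ∈ Finset.range M, (E n).indicator (1 : X → ℝ≥0∞) x) ≤ N * Y.indicator 1 x := by
    intro x M
    by_cases hxY : x ∈ Y
    · have hsum : (∑ n ∈ Finset.range M, (E n).indicator (1 : X → ℝ≥0∞) x)
          = ((Finset.range M).filter (fun n => x ∈ E n)).card := by
        rw [Finset.card_filter]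
        push_cast
        refine Finset.sum_congr rfl (fun n _ => ?_)
        by_cases h : x ∈ E n <;> simp [h]
      rw [hsum]
      have hcard : ((Finset.range M).filter (fun n => x ∈ E n)).card ≤ N := by
        set S := (Finset.range M).filter (fun n => x ∈ E n) with hS
        rcases S.eq_empty_or_nonempty with h | h
        · simp [h]
        · set t := S.min' h with ht
          have hsub : S ⊆ Finset.Ico t (t + N) := by
            intro n hn
            have hnt : t ≤ n := S.min'_le n hn
            have htS : t ∈ S := S.min'_mem h
            have hxt : T^[t] x ∈ B := ((Finset.mem_filter.1 htS).2).2
            have hxn : T^[n] x ∈ B := ((Finset.mem_filter.1 hn).2).2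
            rw [Finset.mem_Ico]
            refine ⟨hnt, ?_⟩
            by_contra hcon
            push_neg at hcon
            have hdiff : N ≤ n - t := by omega
            have : T^[t] x ∈ ⋃ m, ⋃ (_ : N ≤ m), T^[m] ⁻¹' Y := by
              refine Set.mem_iUnion.2 ⟨n - t, Set.mem_iUnion.2 ⟨hdiff, ?_⟩⟩
              have : T^[n - t] (T^[t] x) = T^[n] x := by
                rw [← Function.iterate_add_apply]
                congr 1; omega
              simp only [Set.mem_preimage, this]
              exact hBY hxn
            exact hxt.2 this
          calc S.card ≤ (Finset.Ico t (t + N)).card := Finset.card_le_card hsub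
            _ = N := by rw [Nat.card_Ico]; omega
      calc ((((Finset.range M).filter (fun n => x ∈ E n)).card : ℝ≥0∞))
          ≤ (N : ℝ≥0∞) := by exact_mod_cast hcard
        _ = N * Y.indicator 1 x := by simp [Set.indicator_of_mem hxY]
    · have : ∀ n ∈ Finset.range M, (E n).indicator (1 : X → ℝ≥0∞) x = 0 := by
        intro n _
        exact Set.indicator_of_notMem (fun hx => hxY (hEY n hx)) _
      rw [Finset.sum_congr rfl this]
      simp
  -- integral bound
  have claim2 : ∀ M : ℕ, (∑ n ∈ Finset.range M, mu (E n)) ≤ N * mu Y := by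
    intro M
    have h1 : (∑ n ∈ Finset.range M, mu (E n))
        = ∫⁻ x, ∑ n ∈ Finset.range M, (E n).indicator (1 : X → ℝ≥0∞) x ∂mu := by
      rw [lintegral_finset_sum _ (fun n _ => measurable_one.indicator (hEm n))]
      refine Finset.sum_congr rfl (fun n _ => ?_)
      rw [lintegral_indicator (hEm n)]
      simp
    rw [h1]
    calc ∫⁻ x, ∑ n ∈ Finset.range M, (E n).indicator (1 : X → ℝ≥0∞) x ∂mu
        ≤ ∫⁻ x, (N : ℝ≥0∞) * Y.indicator 1 x ∂mu := lintegral_mono (fun x => claim1 x M)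
      _ = N * mu Y := by
          rw [lintegral_const_mul _ (measurable_one.indicator hYm), lintegral_indicator hYm]
          simp
  -- set lintegral of each term over B
  have claim3 : ∀ n, ∫⁻ x in B, ENNReal.ofReal (f n x) ∂mu = mu (E n) := by
    intro n
    rw [← ofReal_integral_eq_lintegral_ofReal ((hInt n).restrict)
      (ae_restrict_of_ae (hnn n))]
    rw [hSet n B hBm]
    exact ENNReal.ofReal_toReal (lt_of_le_of_lt (measure_mono (hEY n)) hYfin).ne
  set G : ℕ → X → ℝ≥0∞ := fun M x => ∑ n ∈ Finset.range M, ENNReal.ofReal (f n x) with hG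
  have hGone : ∀ M, ∫⁻ x in B, G M x ∂mu ≤ N * mu Y := by
    intro M
    have : ∫⁻ x in B, G M x ∂mu = ∑ n ∈ Finset.range M, mu (E n) := by
      rw [lintegral_finset_sum' _ (fun n _ =>
        ((hInt n).aestronglyMeasurable.aemeasurable.restrict).ennreal_ofReal)]
      exact Finset.sum_congr rfl (fun n _ => claim3 n)
    rw [this]; exact claim2 M
  -- monotone convergence
  have hGmono : ∀ x, Monotone (fun M => G M x) := by
    intro x M₁ M₂ h
    exact Finset.sum_le_sum_of_subset (Finset.range_subset_range.2 h)
  have hGmeas : ∀ M, AEMeasurable (G M) (mu.restrict B) := by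
    intro M
    exact Finset.aemeasurable_fun_sum _ (fun n _ =>
      ((hInt n).aestronglyMeasurable.aemeasurable.restrict).ennreal_ofReal)
  have hMCT : ∫⁻ x in B, (⨆ M, G M x) ∂mu = ⨆ M, ∫⁻ x in B, G M x ∂mu :=
    lintegral_iSup' hGmeas (Filter.Eventually.of_forall (fun x => hGmono x))
  -- a.e. on B the sup is ⊤
  have hdivB : ∀ᵐ x ∂(mu.restrict B),
      Tendsto (fun M => ∑ n ∈ Finset.range M, f n x) atTop atTop :=
    ae_restrict_of_ae_restrict_of_subset hBY hdiv
  have hnnB : ∀ᵐ x ∂(mu.restrict B), ∀ n, 0 ≤ f n x := by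
    rw [ae_all_iff]
    exact fun n => ae_restrict_of_ae (hnn n)
  have htop : ∀ᵐ x ∂(mu.restrict B), (⨆ M, G M x) = ⊤ := by
    filter_upwards [hdivB, hnnB] with x hx hxn
    have heq : ∀ M, G M x = ENNReal.ofReal (∑ n ∈ Finset.range M, f n x) := by
      intro M
      rw [ENNReal.ofReal_sum_of_nonneg (fun n _ => hxn n)]
    have : Tendsto (fun M => G M x) atTop (nhds ⊤) := by
      simp_rw [heq]
      exact ENNReal.tendsto_ofReal_atTop.comp hx
    exact tendsto_nhds_unique (tendsto_atTop_iSup (hGmono x)) this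
  have hint_top : ∫⁻ x in B, (⨆ M, G M x) ∂mu = ⊤ := by
    rw [lintegral_congr_ae htop, lintegral_const]
    rw [Measure.restrict_apply_univ]
    exact ENNReal.top_mul hB0
  rw [hint_top] at hMCT
  have : (⊤ : ℝ≥0∞) ≤ N * mu Y := hMCT.symm ▸ iSup_le hGone
  exact absurd (lt_of_le_of_lt this (ENNReal.mul_lt_top (by simp) hYfin)) (lt_irrefl _)

lemma iterPre {X : Type*} (T : X → X) (i j : ℕ) (S : Set X) :
    T^[i] ⁻¹' (T^[j] ⁻¹' S) = T^[j + i] ⁻¹' S := by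
  ext x
  simp only [Set.mem_preimage, Function.iterate_add_apply]

theorem stmt12 {X : Type*} [MeasurableSpace X]
    (T : X → X) (hT : Measurable T)
    (mu : Measure X) [SigmaFinite mu]
    (hinv : ∀ A : Set X, MeasurableSet A → mu (T ⁻¹' A) = mu A)
    (herg : ∀ A : Set X, MeasurableSet A → mu (symmDiff (T ⁻¹' A) A) = 0 →
      mu A = 0 ∨ mu Aᶜ = 0)
    (P : (X → ℝ) → (X → ℝ))
    (hP : ∀ f : X → ℝ, Integrable f mu → ∀ A : Set X, MeasurableSet A →
      ∫ x in A, P f x ∂mu = ∫ x in T ⁻¹' A, f x ∂mu)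
    (Y : Set X) (hYm : MeasurableSet Y) (hY0 : 0 < mu Y) (hYfin : mu Y < ∞)
    (hdiv : ∀ᵐ x ∂(mu.restrict Y),
      Tendsto (fun N => ∑ n ∈ Finset.range N, P^[n] (Y.indicator 1) x)
        atTop atTop) :
    ∀ A : Set X, MeasurableSet A → 0 < mu A →
      ∃ n : ℕ, 1 ≤ n ∧ 0 < mu (A ∩ T^[n] ⁻¹' A) := by
  classical
  have hiter : ∀ n (A : Set X), MeasurableSet A → mu (T^[n] ⁻¹' A) = mu A := by
    intro n
    induction n with
    | zero => intro A _; simp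
    | succ n ih =>
      intro A hA
      have h1 : T^[n+1] ⁻¹' A = T ⁻¹' (T^[n] ⁻¹' A) := by
        rw [Function.iterate_succ, Set.preimage_comp]
      rw [h1, hinv _ ((hT.iterate n) hA), ih A hA]
  have hInt : ∀ n, Integrable (P^[n] (Y.indicator 1)) mu :=
    fun n => (stepA T hT mu P hP Y hYm hY0 hYfin n).1
  have hSetInt : ∀ n, ∀ A : Set X, MeasurableSet A →
      ∫ x in A, P^[n] (Y.indicator 1) x ∂mu = (mu (Y ∩ T^[n] ⁻¹' A)).toReal :=
    fun n => (stepA T hT mu P hP Y hYm hY0 hYfin n).2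
  have hB : ∀ N, 1 ≤ N → mu (Y \ ⋃ n, ⋃ (_ : N ≤ n), T^[n] ⁻¹' Y) = 0 :=
    fun N hN => stepB T hT mu P Y hYm hY0 hYfin hdiv hInt hSetInt N hN
  set U : Set X := ⋂ N, ⋃ n, ⋃ (_ : N ≤ n), T^[n] ⁻¹' Y with hU
  have hUm : MeasurableSet U :=
    MeasurableSet.iInter fun N => MeasurableSet.iUnion fun n =>
      MeasurableSet.iUnion fun _ => (hT.iterate n) hYm
  have hTU : T ⁻¹' U = U := by
    ext x
    simp only [Set.mem_preimage, hU, Set.mem_iInter, Set.mem_iUnion]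
    constructor
    · intro h N
      obtain ⟨n, hn, hx⟩ := h N
      refine ⟨n + 1, ⟨by omega, ?_⟩⟩
      rw [Function.iterate_succ_apply]
      exact hx
    · intro h N
      obtain ⟨n, hn, hx⟩ := h (N + 1)
      refine ⟨n - 1, ⟨by omega, ?_⟩⟩
      have heq : T^[n-1] (T x) = T^[n] x := by
        rw [← Function.iterate_succ_apply]
        congr 1
        omega
      rw [heq]
      exact hx
  have hYU : mu (Y \ U) = 0 := by
    have hYdiff : Y \ U = ⋃ N, (Y \ ⋃ n, ⋃ (_ : N ≤ n), T^[n] ⁻¹' Y) := by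
      rw [hU, Set.diff_iInter]
    rw [hYdiff]
    refine measure_iUnion_null fun N => ?_
    rcases Nat.eq_zero_or_pos N with h0 | h1
    · subst h0
      refine measure_mono_null (Set.diff_subset_diff_right ?_) (hB 1 le_rfl)
      exact Set.iUnion₂_mono' fun n hn => ⟨n, Nat.zero_le n, subset_rfl⟩
    · exact hB N h1
  have hUc : mu Uᶜ = 0 := by
    rcases herg U hUm (by rw [hTU]; simp) with h | h
    · exfalso
      have h1 : mu (Y \ U) + mu (Y ∩ U) = mu Y := measure_diff_add_inter Y hUm
      rw [hYU, zero_add] at h1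
      have h2 : mu Y ≤ mu U := h1 ▸ measure_mono Set.inter_subset_right
      rw [h] at h2
      exact absurd (le_antisymm h2 zero_le) hY0.ne'
    · exact h
  -- main argument
  intro A hA hApos
  by_contra hcon
  push_neg at hcon
  have hwander : ∀ n, 1 ≤ n → mu (A ∩ T^[n] ⁻¹' A) = 0 :=
    fun n hn => le_antisymm (hcon n hn) zero_le
  have hAU : mu A ≤ mu (A ∩ U) := by
    have h2 : mu (A \ U) = 0 := measure_mono_null (fun x hx => hx.2) hUc
    have h3 : mu (A ∩ U) + mu (A \ U) = mu A := measure_inter_add_diff A hUm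
    rw [h2, add_zero] at h3
    exact h3.ge
  have hcover : A ∩ U ⊆ ⋃ k, (A ∩ T^[k] ⁻¹' Y) := by
    rintro x ⟨hxA, hxU⟩
    obtain ⟨n, hn⟩ := Set.mem_iUnion.1 ((Set.mem_iInter.1 hxU) 0)
    obtain ⟨-, hx⟩ := Set.mem_iUnion.1 hn
    exact Set.mem_iUnion.2 ⟨n, hxA, hx⟩
  obtain ⟨k, hk⟩ : ∃ k, mu (A ∩ T^[k] ⁻¹' Y) ≠ 0 := by
    by_contra hall
    push_neg at hall
    have h4 : mu (A ∩ U) = 0 := measure_mono_null hcover (measure_iUnion_null hall)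
    exact absurd (le_antisymm (hAU.trans h4.le) zero_le) hApos.ne'
  set W : Set X := A ∩ T^[k] ⁻¹' Y with hW
  have hWm : MeasurableSet W := hA.inter ((hT.iterate k) hYm)
  have hWpos : 0 < mu W := zero_lt_iff.2 hk
  have hWfin : mu W < ∞ := by
    refine lt_of_le_of_lt (measure_mono Set.inter_subset_right) ?_
    rw [hiter k Y hYm]; exact hYfin
  have hWdisj : ∀ i j, i < j → mu (T^[i] ⁻¹' W ∩ T^[j] ⁻¹' W) = 0 := by
    intro i j hij
    have hset : T^[i] ⁻¹' W ∩ T^[j] ⁻¹' W = T^[i] ⁻¹' (W ∩ T^[j - i] ⁻¹' W) := by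
      ext x
      have hji : T^[j] x = T^[j - i] (T^[i] x) := by
        rw [← Function.iterate_add_apply]
        congr 1
        omega
      simp only [Set.mem_preimage, Set.mem_inter_iff, hji]
    rw [hset, hiter i _ (hWm.inter ((hT.iterate (j - i)) hWm))]
    refine measure_mono_null ?_ (hwander (j - i) (by omega))
    exact Set.inter_subset_inter Set.inter_subset_left
      (Set.preimage_mono Set.inter_subset_left)
  -- first-entry decomposition
  set C : ℕ → Set X := fun M => ⋃ m, ⋃ (_ : m < M), T^[m] ⁻¹' Y with hC
  have hCmeas : ∀ M, MeasurableSet (C M) := fun M =>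
    MeasurableSet.iUnion fun m => MeasurableSet.iUnion fun _ => (hT.iterate m) hYm
  set D : ℕ → Set X := fun m => T^[m] ⁻¹' Y \ C m with hD
  have hDmeas : ∀ m, MeasurableSet (D m) := fun m => ((hT.iterate m) hYm).diff (hCmeas m)
  have hC0 : C 0 = ∅ := by
    ext x; simp [hC]
  have hD0 : D 0 = Y := by
    rw [hD]
    simp only [hC0]
    simp
  have hCsucc : ∀ M, C (M + 1) = C M ∪ D M := by
    intro M
    apply Set.Subset.antisymm
    · intro x hx
      obtain ⟨m, hm⟩ := Set.mem_iUnion.1 hx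
      obtain ⟨hmlt, hxm⟩ := Set.mem_iUnion.1 hm
      rcases Nat.lt_succ_iff_lt_or_eq.1 hmlt with h | h
      · exact Or.inl (Set.mem_iUnion.2 ⟨m, Set.mem_iUnion.2 ⟨h, hxm⟩⟩)
      · subst h
        by_cases h2 : x ∈ C m
        · exact Or.inl h2
        · exact Or.inr ⟨hxm, h2⟩
    · intro x hx
      rcases hx with h | h
      · obtain ⟨m, hm⟩ := Set.mem_iUnion.1 h
        obtain ⟨hmlt, hxm⟩ := Set.mem_iUnion.1 hm
        exact Set.mem_iUnion.2 ⟨m, Set.mem_iUnion.2 ⟨by omega, hxm⟩⟩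
      · exact Set.mem_iUnion.2 ⟨M, Set.mem_iUnion.2 ⟨by omega, h.1⟩⟩
  have hCadd : ∀ M, mu (C (M + 1)) = mu (C M) + mu (D M) := by
    intro M
    rw [hCsucc M]
    exact measure_union (Set.disjoint_left.2 fun x hx hxD => hxD.2 hx) (hDmeas M)
  have hDfin : ∀ m, mu (D m) < ∞ := by
    intro m
    refine lt_of_le_of_lt (measure_mono Set.diff_subset) ?_
    rw [hiter m Y hYm]; exact hYfin
  have hCfin : ∀ M, mu (C M) < ∞ := by
    intro M
    induction M with
    | zero => simp [hC0]
    | succ M ih =>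
      rw [hCadd M]
      exact ENNReal.add_lt_top.2 ⟨ih, hDfin M⟩
  have hCmono : ∀ a b, a ≤ b → C a ⊆ C b := by
    intro a b hab x hx
    obtain ⟨m, hm⟩ := Set.mem_iUnion.1 hx
    obtain ⟨hmlt, hxm⟩ := Set.mem_iUnion.1 hm
    exact Set.mem_iUnion.2 ⟨m, Set.mem_iUnion.2 ⟨by omega, hxm⟩⟩
  have hDstep : ∀ m, D (m + 1) = T ⁻¹' (D m) \ Y := by
    intro m
    ext x
    constructor
    · rintro ⟨hx, hnx⟩
      have hnx' : ∀ j, j < m + 1 → T^[j] x ∉ Y := by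
        intro j hj hmem
        exact hnx (Set.mem_iUnion.2 ⟨j, Set.mem_iUnion.2 ⟨hj, hmem⟩⟩)
      refine ⟨⟨?_, ?_⟩, hnx' 0 (by omega)⟩
      · show T^[m] (T x) ∈ Y
        rw [← Function.iterate_succ_apply]
        exact hx
      · intro hmem
        obtain ⟨j, hj⟩ := Set.mem_iUnion.1 hmem
        obtain ⟨hjlt, hxj⟩ := Set.mem_iUnion.1 hj
        have : T^[j+1] x ∈ Y := by
          rw [Function.iterate_succ_apply]
          exact hxj
        exact hnx' (j+1) (by omega) this
    · rintro ⟨⟨hx, hnx⟩, hxY⟩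
      refine ⟨?_, ?_⟩
      · show T^[m+1] x ∈ Y
        rw [Function.iterate_succ_apply]
        exact hx
      · intro hmem
        obtain ⟨j, hj⟩ := Set.mem_iUnion.1 hmem
        obtain ⟨hjlt, hxj⟩ := Set.mem_iUnion.1 hj
        match j, hjlt, hxj with
        | 0, _, hxj => exact hxY hxj
        | j+1, hjlt, hxj =>
          refine hnx ?_
          refine Set.mem_iUnion.2 ⟨j, Set.mem_iUnion.2 ⟨by omega, ?_⟩⟩
          show T^[j] (T x) ∈ Y
          rw [← Function.iterate_succ_apply]
          exact hxj
  set R : ℕ → Set X := fun m => Y ∩ T ⁻¹' (D m) with hR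
  have hRmeas : ∀ m, MeasurableSet (R m) := fun m => hYm.inter (hT (hDmeas m))
  have hRD : ∀ m, mu (D (m + 1)) + mu (R m) = mu (D m) := by
    intro m
    have h1 : mu (T ⁻¹' (D m) \ Y) + mu (T ⁻¹' (D m) ∩ Y) = mu (T ⁻¹' (D m)) :=
      measure_diff_add_inter _ hYm
    rw [hinv _ (hDmeas m)] at h1
    rw [hDstep m]
    have h2 : R m = T ⁻¹' (D m) ∩ Y := Set.inter_comm _ _
    rw [h2]
    exact h1
  have hDdec : ∀ m, mu (D (m + 1)) ≤ mu (D m) := fun m => by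
    rw [← hRD m]; exact le_self_add
  have hDmono : ∀ a b, a ≤ b → mu (D b) ≤ mu (D a) := by
    intro a b hab
    induction b, hab using Nat.le_induction with
    | base => exact le_rfl
    | succ b hb ih => exact (hDdec b).trans ih
  have htel : ∀ M, mu (D M) + ∑ m ∈ Finset.range M, mu (R m) = mu Y := by
    intro M
    induction M with
    | zero => simp [hD0]
    | succ M ih =>
      rw [Finset.sum_range_succ]
      calc mu (D (M + 1)) + (∑ m ∈ Finset.range M, mu (R m) + mu (R M))
          = (mu (D (M + 1)) + mu (R M)) + ∑ m ∈ Finset.range M, mu (R m) := by ring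
        _ = mu (D M) + ∑ m ∈ Finset.range M, mu (R m) := by rw [hRD M]
        _ = mu Y := ih
  -- disjointness of the R m and lower bound on their total mass
  have hDdisj : ∀ m m', m < m' → Disjoint (D m) (D m') := by
    intro m m' hmm'
    refine Set.disjoint_left.2 fun x hxm hxm' => ?_
    exact hxm'.2 (Set.mem_iUnion.2 ⟨m, Set.mem_iUnion.2 ⟨hmm', hxm.1⟩⟩)
  have hRdisj : ∀ m m', m ≠ m' → Disjoint (R m) (R m') := by
    intro m m' hne
    have hd : Disjoint (D m) (D m') := by
      rcases Nat.lt_or_ge m m' with h | h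
      · exact hDdisj m m' h
      · exact (hDdisj m' m (by omega)).symm
    refine Disjoint.mono Set.inter_subset_right Set.inter_subset_right ?_
    exact hd.preimage T
  have hsumR : mu Y ≤ ∑' m, mu (R m) := by
    have hS1m : MeasurableSet (⋃ n, ⋃ (_ : 1 ≤ n), T^[n] ⁻¹' Y) :=
      MeasurableSet.iUnion fun n => MeasurableSet.iUnion fun _ => (hT.iterate n) hYm
    have hcup : Y ∩ (⋃ n, ⋃ (_ : 1 ≤ n), T^[n] ⁻¹' Y) ⊆ ⋃ m, R m := by
      rintro x ⟨hxY, hxS⟩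
      obtain ⟨n, hn⟩ := Set.mem_iUnion.1 hxS
      obtain ⟨hn1, hxn⟩ := Set.mem_iUnion.1 hn
      have hex : ∃ n, 0 < n ∧ T^[n] x ∈ Y := ⟨n, by omega, hxn⟩
      obtain ⟨hn0pos, hn0Y⟩ := Nat.find_spec hex
      set n0 := Nat.find hex with hn0
      refine Set.mem_iUnion.2 ⟨n0 - 1, hxY, ?_⟩
      show T x ∈ D (n0 - 1)
      refine ⟨?_, ?_⟩
      · show T^[n0-1] (T x) ∈ Y
        have h9 : T^[n0] x = T^[n0-1] (T x) := by
          conv_lhs => rw [show n0 = (n0-1)+1 by omega]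
          rw [Function.iterate_succ_apply]
        rw [← h9]
        exact hn0Y
      · intro hmem
        obtain ⟨j, hj⟩ := Set.mem_iUnion.1 hmem
        obtain ⟨hjlt, hxj⟩ := Set.mem_iUnion.1 hj
        have hxj' : T^[j+1] x ∈ Y := by
          rw [Function.iterate_succ_apply]
          exact hxj
        exact Nat.find_min hex (m := j + 1) (by omega) ⟨by omega, hxj'⟩
    have h5 : mu (Y \ (⋃ n, ⋃ (_ : 1 ≤ n), T^[n] ⁻¹' Y)) = 0 := hB 1 le_rfl
    have h6 : mu (Y \ _) + mu (Y ∩ (⋃ n, ⋃ (_ : 1 ≤ n), T^[n] ⁻¹' Y)) = mu Y :=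
      measure_diff_add_inter Y hS1m
    rw [h5, zero_add] at h6
    calc mu Y = mu (Y ∩ (⋃ n, ⋃ (_ : 1 ≤ n), T^[n] ⁻¹' Y)) := h6.symm
      _ ≤ mu (⋃ m, R m) := measure_mono hcup
      _ = ∑' m, mu (R m) := measure_iUnion (fun m m' hne => hRdisj m m' hne) hRmeas
  -- choose m0 with small mu (D m0)
  have hw2pos : (0 : ℝ≥0∞) < mu W / 2 := ENNReal.div_pos hWpos.ne' (by simp)
  obtain ⟨m0, hm0⟩ : ∃ m0, mu (D m0) < mu W / 2 := by
    by_contra hcontra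
    push_neg at hcontra
    have hWle : mu W ≤ mu Y := by
      rw [← hiter k Y hYm]
      exact measure_mono Set.inter_subset_right
    have hw2le : mu W / 2 ≤ mu Y := (ENNReal.half_le_self).trans hWle
    have hple : ∀ M, ∑ m ∈ Finset.range M, mu (R m) ≤ mu Y - mu W / 2 := by
      intro M
      refine ENNReal.le_sub_of_add_le_right ?_ ?_
      · exact (lt_of_le_of_lt hw2le hYfin).ne
      · calc ∑ m ∈ Finset.range M, mu (R m) + mu W / 2
            ≤ ∑ m ∈ Finset.range M, mu (R m) + mu (D M) := add_le_add_right (hcontra M) _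
          _ = mu Y := by rw [add_comm]; exact htel M
    have h7 : ∑' m, mu (R m) ≤ mu Y - mu W / 2 := by
      rw [ENNReal.tsum_eq_iSup_nat]
      exact iSup_le hple
    have h8 : mu Y - mu W / 2 < mu Y :=
      ENNReal.sub_lt_self hYfin.ne hY0.ne' hw2pos.ne'
    exact absurd (hsumR.trans h7) (not_le.2 h8)
  -- lower bound: M * mu W ≤ mu (C (M + k))
  set V : ℕ → Set X := fun M => ⋃ i, ⋃ (_ : i < M), T^[i] ⁻¹' W with hV
  have hVmeas : ∀ M, MeasurableSet (V M) := fun M =>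
    MeasurableSet.iUnion fun i => MeasurableSet.iUnion fun _ => (hT.iterate i) hWm
  have hVsub : ∀ M, V M ⊆ C (M + k) := by
    intro M x hx
    obtain ⟨i, hi⟩ := Set.mem_iUnion.1 hx
    obtain ⟨hilt, hxi⟩ := Set.mem_iUnion.1 hi
    have hxkY : T^[k+i] x ∈ Y := by
      rw [Function.iterate_add_apply]
      exact hxi.2
    exact Set.mem_iUnion.2 ⟨k + i, Set.mem_iUnion.2 ⟨by omega, hxkY⟩⟩
  have hVlow : ∀ M : ℕ, (M : ℝ≥0∞) * mu W ≤ mu (V M) := by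
    intro M
    induction M with
    | zero => simp
    | succ M ih =>
      have hVsucc : V (M + 1) = V M ∪ T^[M] ⁻¹' W := by
        apply Set.Subset.antisymm
        · intro x hx
          obtain ⟨i, hi⟩ := Set.mem_iUnion.1 hx
          obtain ⟨hilt, hxi⟩ := Set.mem_iUnion.1 hi
          rcases Nat.lt_succ_iff_lt_or_eq.1 hilt with h | h
          · exact Or.inl (Set.mem_iUnion.2 ⟨i, Set.mem_iUnion.2 ⟨h, hxi⟩⟩)
          · subst h
            exact Or.inr hxi
        · intro x hx
          rcases hx with h | h
          · obtain ⟨i, hi⟩ := Set.mem_iUnion.1 h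
            obtain ⟨hilt, hxi⟩ := Set.mem_iUnion.1 hi
            exact Set.mem_iUnion.2 ⟨i, Set.mem_iUnion.2 ⟨by omega, hxi⟩⟩
          · exact Set.mem_iUnion.2 ⟨M, Set.mem_iUnion.2 ⟨by omega, h⟩⟩
      have hinter : mu (V M ∩ T^[M] ⁻¹' W) = 0 := by
        refine measure_mono_null (fun x hx => ?_)
          (measure_iUnion_null fun i => measure_iUnion_null fun hi => hWdisj i M hi)
        obtain ⟨hx1, hx2⟩ := hx
        obtain ⟨i, hi⟩ := Set.mem_iUnion.1 hx1
        obtain ⟨hilt, hxi⟩ := Set.mem_iUnion.1 hi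
        exact Set.mem_iUnion.2 ⟨i, Set.mem_iUnion.2 ⟨hilt, ⟨hxi, hx2⟩⟩⟩
      have hVadd : mu (V (M + 1)) = mu (V M) + mu (T^[M] ⁻¹' W) := by
        rw [hVsucc]
        exact measure_union₀ ((hT.iterate M) hWm).nullMeasurableSet hinter
      rw [hVadd, hiter M W hWm]
      push_cast
      calc ((M : ℝ≥0∞) + 1) * mu W = (M : ℝ≥0∞) * mu W + mu W := by ring
        _ ≤ mu (V M) + mu W := add_le_add_left ih _
  have hCup : ∀ M, mu (C (m0 + M)) ≤ mu (C m0) + M * mu (D m0) := by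
    intro M
    induction M with
    | zero => simp
    | succ M ih =>
      have heq : m0 + (M + 1) = (m0 + M) + 1 := by omega
      rw [heq, hCadd (m0 + M)]
      have h2 : mu (D (m0 + M)) ≤ mu (D m0) := hDmono m0 (m0 + M) (by omega)
      calc mu (C (m0 + M)) + mu (D (m0 + M))
          ≤ (mu (C m0) + M * mu (D m0)) + mu (D m0) := add_le_add ih h2
        _ = mu (C m0) + (↑(M + 1)) * mu (D m0) := by push_cast; ring
  -- pass to real numbers
  set w : ℝ := (mu W).toReal with hw'
  have hwpos : 0 < w := ENNReal.toReal_pos hWpos.ne' hWfin.ne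
  set d : ℝ := (mu (D m0)).toReal with hd'
  have hdnn : 0 ≤ d := ENNReal.toReal_nonneg
  have hdlt : d < w / 2 := by
    have h1 : (mu (D m0)).toReal < (mu W / 2).toReal :=
      ENNReal.toReal_strict_mono (by
        exact (ENNReal.div_lt_top hWfin.ne (by norm_num)).ne) hm0
    rwa [ENNReal.toReal_div, show ((2:ℝ≥0∞)).toReal = 2 by simp] at h1
  set c0 : ℝ := (mu (C m0)).toReal with hc0'
  have hc0nn : 0 ≤ c0 := ENNReal.toReal_nonneg
  have hkey : ∀ M : ℕ, (M : ℝ) * w ≤ c0 + (M + k) * d := by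
    intro M
    have h1 : (M : ℝ≥0∞) * mu W ≤ mu (C m0) + (↑(M + k)) * mu (D m0) := by
      calc (M : ℝ≥0∞) * mu W ≤ mu (V M) := hVlow M
        _ ≤ mu (C (M + k)) := measure_mono (hVsub M)
        _ ≤ mu (C (m0 + (M + k))) := measure_mono (hCmono _ _ (by omega))
        _ ≤ mu (C m0) + (↑(M + k)) * mu (D m0) := hCup (M + k)
    have hfin : mu (C m0) + (↑(M + k)) * mu (D m0) ≠ ∞ := by
      refine (ENNReal.add_lt_top.2 ⟨hCfin m0, ?_⟩).ne
      exact ENNReal.mul_lt_top (by simp) (hDfin m0)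
    have h2 := ENNReal.toReal_mono hfin h1
    rw [ENNReal.toReal_mul, ENNReal.toReal_add (hCfin m0).ne
      (ENNReal.mul_lt_top (by simp) (hDfin m0)).ne, ENNReal.toReal_mul, ENNReal.toReal_natCast (M + k)] at h2
    simpa using h2
  -- contradiction
  have hwd : 0 < w - d := by linarith
  obtain ⟨M, hM⟩ := exists_nat_gt ((c0 + (k : ℝ) * d) / (w - d))
  have h3 := hkey M
  have h4 : (M : ℝ) * (w - d) > c0 + (k : ℝ) * d := by
    rw [gt_iff_lt, ← div_lt_iff₀ hwd]
    exact hM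
  nlinarith [h3, h4]
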